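/- Let f : ℂⁿ → ℂ be an ℝ-linear map with f = a' + a'', a' being ℂ-linear, a'' being ℂ-antilinear, and ‖a''‖ < ‖a'‖ (operator norms). Then the kernel of f, viewed as a real subspace of ℂⁿ, is a symplectic subspace with respect to the standard symplectic form ω(u,v) = Re⟨iu, v⟩ on ℂⁿ; that is, the restriction of ω to ker f is a nondegenerate bilinear form. -/

import Mathlib

open Complex Submodule InnerProductSpace

private lemma re_inner_eq' {n : ℕ} (x y : EuclideanSpace ℂ (Fin n)) :
    (inner ℂ x y : ℂ).re = (inner ℝ x y : ℝ) := by
  simp [PiLp.inner_apply, Complex.re_sum]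

/-- If `f = a' + a''` with `a'` complex-linear, `a''` conjugate-linear and
`‖a''‖ < ‖a'‖`, then `ker f` is a symplectic subspace of `ℂⁿ` for the standard
symplectic form `ω(u,v) = Re ⟪i•u, v⟫`. -/
theorem ker_symplectic_of_antilinear_part_small (n : ℕ) (hn : 1 ≤ n)
    (f : EuclideanSpace ℂ (Fin n) →L[ℝ] ℂ)
    (a' : EuclideanSpace ℂ (Fin n) →L[ℂ] ℂ)
    (a'' : EuclideanSpace ℂ (Fin n) →L[ℝ] ℂ)
    (hanti : ∀ (c : ℂ) (v : EuclideanSpace ℂ (Fin n)),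
      a'' (c • v) = (starRingEnd ℂ) c * a'' v)
    (hsum : ∀ v, f v = a' v + a'' v)
    (hnorm : ‖a''‖ < ‖a'‖) :
    ∀ u : EuclideanSpace ℂ (Fin n), f u = 0 →
      (∀ v : EuclideanSpace ℂ (Fin n), f v = 0 →
        (inner ℂ (Complex.I • u) v : ℂ).re = 0) → u = 0 := by
  intro u hu hu2
  haveI : FiniteDimensional ℝ (EuclideanSpace ℂ (Fin n)) := Module.Finite.trans ℂ _
  -- Riesz representation of a'
  set w : EuclideanSpace ℂ (Fin n) := (InnerProductSpace.toDual ℂ (EuclideanSpace ℂ (Fin n))).symm a' with hwdef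
  have hw : ∀ v, a' v = (inner ℂ w v : ℂ) := fun v =>
    (InnerProductSpace.toDual_symm_apply).symm
  have hwnorm : ‖w‖ = ‖a'‖ := LinearIsometryEquiv.norm_map _ a'
  -- conjugate of a'' is complex linear
  let b'ₗ : EuclideanSpace ℂ (Fin n) →ₗ[ℂ] ℂ :=
    { toFun := fun v => starRingEnd ℂ (a'' v)
      map_add' := fun x y => by simp
      map_smul' := fun c v => by simp [hanti] }
  let b' : EuclideanSpace ℂ (Fin n) →L[ℂ] ℂ := ⟨b'ₗ, Complex.conjCLE.continuous.comp a''.continuous⟩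
  have hb'app : ∀ v : EuclideanSpace ℂ (Fin n), b' v = starRingEnd ℂ (a'' v) := fun v => rfl
  have hb'norm : ‖b'‖ = ‖a''‖ := by
    apply le_antisymm
    · refine ContinuousLinearMap.opNorm_le_bound _ (norm_nonneg a'') fun v => ?_
      rw [hb'app]
      simpa using a''.le_opNorm v
    · refine ContinuousLinearMap.opNorm_le_bound _ (norm_nonneg b') fun v => ?_
      have := b'.le_opNorm v
      rw [hb'app] at this
      simpa using this
  set w'' : EuclideanSpace ℂ (Fin n) := (InnerProductSpace.toDual ℂ (EuclideanSpace ℂ (Fin n))).symm b' with hw''def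
  have hw'' : ∀ v, a'' v = starRingEnd ℂ (inner ℂ w'' v : ℂ) := by
    intro v
    have : b' v = (inner ℂ w'' v : ℂ) := (InnerProductSpace.toDual_symm_apply).symm
    rw [hb'app] at this
    rw [← this]
    simp
  have hw''norm : ‖w''‖ = ‖a''‖ := by
    rw [← hb'norm]; exact LinearIsometryEquiv.norm_map _ b'
  have hlt : ‖w''‖ < ‖w‖ := by rw [hwnorm, hw''norm]; exact hnorm
  -- f in terms of w, w''
  have hf : ∀ v, f v = (inner ℂ w v : ℂ) + starRingEnd ℂ (inner ℂ w'' v : ℂ) := by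
    intro v; rw [hsum, hw, hw'']
  set a : EuclideanSpace ℂ (Fin n) := w + w'' with hadef
  set b : EuclideanSpace ℂ (Fin n) := Complex.I • (w - w'') with hbdef
  set K : Submodule ℝ (EuclideanSpace ℂ (Fin n)) := Submodule.span ℝ ({a, b} : Set (EuclideanSpace ℂ (Fin n))) with hKdef
  -- kernel of f is the real orthogonal complement of K
  have hker : ∀ v : EuclideanSpace ℂ (Fin n), f v = 0 ↔ v ∈ Kᗮ := by
    intro v
    have h1 : (inner ℝ a v : ℝ) = (f v).re := by
      rw [← re_inner_eq', hf, hadef, inner_add_left]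
      simp only [Complex.add_re, Complex.conj_re]
    have h2 : (inner ℝ b v : ℝ) = (f v).im := by
      rw [← re_inner_eq', hf, hbdef, inner_smul_left, inner_sub_left]
      simp only [Complex.add_im, Complex.conj_im, Complex.conj_I, Complex.mul_re,
        Complex.sub_re, Complex.sub_im, Complex.neg_re, Complex.neg_im,
        Complex.I_re, Complex.I_im]
      ring
    constructor
    · intro hv
      rw [Submodule.mem_orthogonal]
      intro x hx
      induction hx using Submodule.span_induction with
      | mem x hx =>
        rcases hx with h | h
        · subst h; rw [h1, hv]; simp
        · simp only [Set.mem_singleton_iff] at h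
          subst h; rw [h2, hv]; simp
      | zero => exact inner_zero_left v
      | add x y _ _ hx hy => rw [inner_add_left, hx, hy, add_zero]
      | smul r x _ hx => rw [real_inner_smul_left, hx, mul_zero]
    · intro hv
      have ha : (inner ℝ a v : ℝ) = 0 :=
        (Submodule.mem_orthogonal K v).mp hv a (Submodule.subset_span (by simp))
      have hb : (inner ℝ b v : ℝ) = 0 :=
        (Submodule.mem_orthogonal K v).mp hv b (Submodule.subset_span (by simp))
      rw [h1] at ha; rw [h2] at hb
      exact Complex.ext ha hb
  -- I • u lies in Kᗮᗮ = K
  have hmem : Complex.I • u ∈ K := by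
    rw [← K.orthogonal_orthogonal, Submodule.mem_orthogonal]
    intro x hx
    rw [real_inner_comm, ← re_inner_eq']
    exact hu2 x ((hker x).mpr hx)
  rw [hKdef, Submodule.mem_span_pair] at hmem
  obtain ⟨s, t, hst⟩ := hmem
  -- express u in terms of w, w''
  set α : ℂ := (t : ℂ) - Complex.I * s with hαdef
  have hu' : u = α • w + (-(starRingEnd ℂ α)) • w'' := by
    have h0 : u = (-Complex.I) • (Complex.I • u) := by
      rw [smul_smul]; norm_num
    rw [h0, ← hst]
    have hs : (s : ℝ) • a = (s : ℂ) • a := by simp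
    have ht : (t : ℝ) • b = (t : ℂ) • b := by simp
    rw [hs, ht]
    rw [hadef, hbdef, hαdef]
    simp only [map_sub, map_mul, Complex.conj_I, Complex.conj_ofReal]
    match_scalars <;> ring_nf <;> simp [Complex.I_sq] <;> ring
  -- compute f u
  have hfu : f u = α * ((inner ℂ w w : ℂ) - (inner ℂ w'' w'' : ℂ)) := by
    rw [hf, hu', hαdef]
    simp only [inner_add_right, inner_smul_right, map_add, map_mul, map_neg, map_sub,
      Complex.conj_I, Complex.conj_ofReal, RingHomCompTriple.comp_apply, RingHom.id_apply,
      starRingEnd_self_apply, inner_conj_symm]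
    ring
  rw [hu] at hfu
  have hwpos : (0:ℝ) ≤ ‖w''‖ := norm_nonneg _
  have hne : ((inner ℂ w w : ℂ) - (inner ℂ w'' w'' : ℂ)) ≠ 0 := by
    intro h
    have h1 : (inner ℂ w w : ℂ) = (inner ℂ w'' w'' : ℂ) := by linear_combination h
    rw [inner_self_eq_norm_sq_to_K, inner_self_eq_norm_sq_to_K] at h1
    have h2 : (‖w‖ : ℝ) ^ 2 = (‖w''‖ : ℝ) ^ 2 := by exact_mod_cast h1
    nlinarith
  have hα : α = 0 := by
    rcases mul_eq_zero.mp hfu.symm with h | h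
    · exact h
    · exact absurd h hne
  have hs0 : s = 0 ∧ t = 0 := by
    have hre := congrArg Complex.re hα
    have him := congrArg Complex.im hα
    simp [hαdef] at hre him
    exact ⟨him, hre⟩
  have : Complex.I • u = 0 := by rw [← hst, hs0.1, hs0.2]; simp
  have := congrArg (fun x : EuclideanSpace ℂ (Fin n) => (-Complex.I) • x) this
  simpa [smul_smul] using this
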